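/- Let A be a commutative ring, G a finitely generated A-module. The set of primes p ∈ Spec A at which G_p is a free A_p-module of rank n and at which a fixed map φ : F → G is surjective after localization is open in Spec A, provided F and G are finitely presented. -/

import Mathlib

section Aux

variable {A F G : Type} [CommRing A] [AddCommGroup F] [AddCommGroup G]
  [Module A F] [Module A G]

lemma aux_surj_iff (φ : F →ₗ[A] G) (p : PrimeSpectrum A) :
    Function.Surjective (LocalizedModule.map p.asIdeal.primeCompl φ) ↔
      p ∉ Module.support A (G ⧸ LinearMap.range φ) := by
  set S := p.asIdeal.primeCompl
  rw [Module.notMem_support_iff]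
  have hrange : LinearMap.range (LocalizedModule.map S φ) = (LinearMap.range φ).localized S :=
    (LinearMap.localized'_range_eq_range_localizedMap (Localization S) S
      (LocalizedModule.mkLinearMap S F) (LocalizedModule.mkLinearMap S G) φ).symm
  have e := IsLocalizedModule.iso S ((LinearMap.range φ).toLocalizedQuotient S)
  rw [← LinearMap.range_eq_top, hrange]
  constructor
  · intro h
    exact e.toEquiv.subsingleton_congr.mpr
      ((Submodule.Quotient.subsingleton_iff).mpr h)
  · intro h
    exact (Submodule.Quotient.subsingleton_iff).mp (e.toEquiv.subsingleton_congr.mp h)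

lemma aux_free_iff (hG : Module.FinitePresentation A G) (n : ℕ) (p : PrimeSpectrum A) :
    Nonempty (Module.Basis (Fin n) (Localization.AtPrime p.asIdeal)
        (LocalizedModule p.asIdeal.primeCompl G)) ↔
      p ∈ Module.freeLocus A G ∧ Module.rankAtStalk G p = n := by
  have : Module.FinitePresentation A G := hG
  have : Module.Finite A G := inferInstance
  have : Module.Finite (Localization.AtPrime p.asIdeal)
      (LocalizedModule p.asIdeal.primeCompl G) :=
    Module.Finite.of_isLocalizedModule p.asIdeal.primeCompl
      (LocalizedModule.mkLinearMap p.asIdeal.primeCompl G)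
  constructor
  · rintro ⟨b⟩
    have : Module.Free (Localization.AtPrime p.asIdeal)
        (LocalizedModule p.asIdeal.primeCompl G) := Module.Free.of_basis b
    refine ⟨this, ?_⟩
    rw [Module.rankAtStalk, Module.finrank_eq_card_basis b, Fintype.card_fin]
  · rintro ⟨hfree, hrank⟩
    have : Module.Free (Localization.AtPrime p.asIdeal)
        (LocalizedModule p.asIdeal.primeCompl G) := hfree
    let b := Module.Free.chooseBasis (Localization.AtPrime p.asIdeal)
      (LocalizedModule p.asIdeal.primeCompl G)
    have hcard : Fintype.card
        (Module.Free.ChooseBasisIndex (Localization.AtPrime p.asIdeal)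
          (LocalizedModule p.asIdeal.primeCompl G)) = n := by
      rw [← Module.finrank_eq_card_chooseBasisIndex]
      exact hrank
    exact ⟨b.reindex (Fintype.equivFinOfCardEq hcard)⟩

end Aux

/-- for finitely presented modules `F`, `G` over a commutative ring `A` and
an `A`-linear map `φ : F → G`, the set of primes `p` at which `G_p` is free of rank `n`
over `A_p` and at which `φ` becomes surjective after localization is open in `Spec A`. -/
theorem stmt_17 (A : Type) [CommRing A] (F G : Type) [AddCommGroup F] [AddCommGroup G]
    [Module A F] [Module A G] (hF : Module.FinitePresentation A F)
    (hG : Module.FinitePresentation A G) (φ : F →ₗ[A] G) (n : ℕ) :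
    IsOpen {p : PrimeSpectrum A |
      Nonempty (Module.Basis (Fin n) (Localization.AtPrime p.asIdeal)
        (LocalizedModule p.asIdeal.primeCompl G)) ∧
      Function.Surjective (LocalizedModule.map p.asIdeal.primeCompl φ)} := by
  have : Module.FinitePresentation A G := hG
  have : Module.Finite A G := inferInstance
  have hset : {p : PrimeSpectrum A |
      Nonempty (Module.Basis (Fin n) (Localization.AtPrime p.asIdeal)
        (LocalizedModule p.asIdeal.primeCompl G)) ∧
      Function.Surjective (LocalizedModule.map p.asIdeal.primeCompl φ)} =
      (Subtype.val '' ((fun x : Module.freeLocus A G ↦ Module.rankAtStalk (R := A) G x.1) ⁻¹' {n}))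
        ∩ (Module.support A (G ⧸ LinearMap.range φ))ᶜ := by
    ext p
    simp only [Set.mem_setOf_eq, Set.mem_inter_iff, Set.mem_compl_iff, Set.mem_image,
      Set.mem_preimage, Set.mem_singleton_iff]
    rw [aux_surj_iff φ p, aux_free_iff hG n p]
    constructor
    · rintro ⟨⟨h1, h2⟩, h3⟩
      exact ⟨⟨⟨p, h1⟩, h2, rfl⟩, h3⟩
    · rintro ⟨⟨⟨q, hq⟩, h2, rfl⟩, h3⟩
      exact ⟨⟨hq, h2⟩, h3⟩
  rw [hset]
  refine IsOpen.inter ?_ ?_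
  · exact (Module.isOpen_freeLocus (R := A) (M := G)).isOpenMap_subtype_val _
      (Module.isLocallyConstant_rankAtStalk_freeLocus.isOpen_fiber n)
  · have : Module.Finite A (G ⧸ LinearMap.range φ) := Module.Finite.quotient A _
    exact (Module.isClosed_support (R := A) (M := G ⧸ LinearMap.range φ)).isOpen_compl
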